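/- Fact contradictions do not affect the rule-based contension measure: for any rule base B and any atom c not occurring in any rule of B with nonempty body, I^RB_c(B ∪ {c, ¬c}) = I^RB_c(B). -/
import Mathlib


open scoped Classical

/-- A rule over atoms `A`: literals are pairs (atom, sign). -/
structure Rule (A : Type*) where
  body : Finset (A × Bool)
  head : A × Bool
deriving DecidableEq

abbrev RuleBase (A : Type*) := Finset (Rule A)

variable {A : Type*}

/-- The complement of a literal. -/
def litCompl (l : A × Bool) : A × Bool := (l.1, !l.2)

/-- The fact with head `l` (empty body). -/
def factR (l : A × Bool) : Rule A := ⟨∅, l⟩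

/-- The facts (empty-body rules) of a rule base. -/
noncomputable def facts [DecidableEq A] (B : RuleBase A) : RuleBase A :=
  B.filter (fun r => r.body = ∅)

/-- The proper (non-fact) rules of a rule base. -/
noncomputable def properRules [DecidableEq A] (B : RuleBase A) : RuleBase A :=
  B.filter (fun r => r.body ≠ ∅)

/-- A set of literals is closed w.r.t. a rule base. -/
def Closed (B : RuleBase A) (M : Set (A × Bool)) : Prop :=
  ∀ r ∈ B, (↑r.body ⊆ M) → r.head ∈ M

/-- The minimal model: the smallest closed set of literals. -/
def minModel (B : RuleBase A) : Set (A × Bool) :=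
  {l | ∀ M : Set (A × Bool), Closed B M → l ∈ M}

/-- A set of literals is consistent if it contains no complementary pair. -/
def ConsistentLits (M : Set (A × Bool)) : Prop :=
  ¬ ∃ a : A, (a, true) ∈ M ∧ (a, false) ∈ M

/-- A rule base is consistent if its minimal model is consistent. -/
def Consistent (B : RuleBase A) : Prop := ConsistentLits (minModel B)

/-- The minimal inconsistent subsets of a rule base. -/
def MI (B : RuleBase A) : Set (RuleBase A) :=
  { M | M ⊆ B ∧ ¬ Consistent M ∧ ∀ M' ⊂ M, Consistent M' }

/-- `M` contains a complementary pair of facts. -/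
def hasComplFactPair (M : RuleBase A) : Prop :=
  ∃ a : A, factR (a, true) ∈ M ∧ factR (a, false) ∈ M

/-- Minimal inconsistent subsets containing no complementary pair of facts. -/
def MIF (B : RuleBase A) : Set (RuleBase A) :=
  { M ∈ MI B | ¬ hasComplFactPair M }

/-- A formula is free in a rule base if it belongs to no minimal inconsistent subset. -/
def Free (r : Rule A) (B : RuleBase A) : Prop := ∀ M ∈ MI B, r ∉ M

/-- Rule consistency: the rules together with any consistent set of facts are consistent. -/
def RuleConsistent [DecidableEq A] (B : RuleBase A) : Prop :=
  ∀ F' ⊆ facts B, Consistent F' → Consistent (properRules B ∪ F')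

/-- The drastic inconsistency measure. -/
noncomputable def Idr (B : RuleBase A) : ℕ := if Consistent B then 0 else 1

/-- The rule-based drastic inconsistency measure. -/
noncomputable def IRBd (B : RuleBase A) : ℕ := if MIF B = ∅ then 0 else 1

/-- The rule-based MI-inconsistency measure. -/
noncomputable def IRBMI (B : RuleBase A) : ℕ := (MIF B).ncard

/-- The rule-based problematic inconsistency measure: number of distinct
    non-fact rules occurring in some element of `MIF B`. -/
noncomputable def IRBp (B : RuleBase A) : ℕ :=
  {r : Rule A | r.body ≠ ∅ ∧ ∃ M ∈ MIF B, r ∈ M}.ncard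

/-- Three truth values. -/
inductive TV | t | b | f
deriving DecidableEq

def TV.negv : TV → TV
  | .t => .f
  | .f => .t
  | .b => .b

/-- Value of a literal under a three-valued interpretation. -/
def litVal (v : A → TV) (l : A × Bool) : TV :=
  if l.2 then v l.1 else (v l.1).negv

/-- Designated truth values. -/
def TV.des : TV → Prop
  | .f => False
  | _ => True

/-- Three-valued satisfaction of a rule. -/
def sat3 (v : A → TV) (r : Rule A) : Prop :=
  (∀ l ∈ r.body, (litVal v l).des) → (litVal v r.head).des

/-- The rule-based contension inconsistency measure. -/
noncomputable def IRBc (B : RuleBase A) : ℕ :=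
  sInf { n : ℕ | ∃ v : A → TV,
    (∀ M ∈ MIF B, ∀ r ∈ M, sat3 v r) ∧ n = {a : A | v a = TV.b}.ncard }

/-- The payoff of `α` in coalition `C` (w.r.t. rule base `B` and measure `I`). -/
noncomputable def CoalPayoff [DecidableEq A] (I : RuleBase A → ℝ) (B : RuleBase A)
    (α : Rule A) (C : RuleBase A) : ℝ :=
  ((Nat.factorial (C.card - 1) * Nat.factorial (B.card - C.card) : ℕ) : ℝ)
    / ((Nat.factorial B.card : ℕ) : ℝ) * (I C - I (C.erase α))

/-- The additional payoff shifted from facts to non-free rules. -/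
noncomputable def AddPayoff [DecidableEq A] (I : RuleBase A → ℝ) (B : RuleBase A)
    (r : Rule A) (C : RuleBase A) : ℝ :=
  if Free r C then 0
  else (∑ f ∈ C.filter (fun x => x.body = ∅), CoalPayoff I B f C)
        / ((C.filter (fun x => x.body ≠ ∅ ∧ ¬ Free x C)).card : ℝ)

/-- The adjusted Shapley inconsistency value. -/
noncomputable def Sstar [DecidableEq A] (I : RuleBase A → ℝ) (B : RuleBase A)
    (α : Rule A) : ℝ :=
  if α.body = ∅ then 0
  else ∑ C ∈ B.powerset, (CoalPayoff I B α C + AddPayoff I B α C)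

lemma closed_minModel (N : RuleBase A) : Closed N (minModel N) := by
  intro r hr hbody M hM
  exact hM r hr (fun l hl => hbody hl M hM)

lemma minModel_subset_heads (N : RuleBase A) :
    minModel N ⊆ {l | ∃ r ∈ N, r.head = l} :=
  fun _ hl => hl _ (fun r hr _ => ⟨r, hr, rfl⟩)

lemma mem_B_of_nonfact [DecidableEq A] {B : RuleBase A} {c : A} {r : Rule A}
    (hr : r ∈ insert (factR (c, true)) (insert (factR (c, false)) B))
    (hb : r.body ≠ ∅) : r ∈ B := by
  rcases Finset.mem_insert.1 hr with rfl | hr'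
  · exact absurd rfl hb
  · rcases Finset.mem_insert.1 hr' with rfl | hr''
    · exact absurd rfl hb
    · exact hr''

lemma not_mem_MIF_fact [DecidableEq A] (B : RuleBase A) (c : A)
    (h : ∀ r ∈ B, r.body ≠ ∅ → (r.head.1 ≠ c ∧ ∀ l ∈ r.body, l.1 ≠ c))
    (b : Bool) (M : RuleBase A)
    (hM : M ∈ MIF (insert (factR (c, true)) (insert (factR (c, false)) B))) :
    factR (c, b) ∉ M := by
  obtain ⟨⟨hsub, hinc, hmin⟩, hnc⟩ := hM
  intro hf
  set f := factR (c, b) with hfdef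
  have hN : Consistent (M.erase f) := hmin _ (Finset.erase_ssubset hf)
  have hclosed : Closed M (minModel (M.erase f) ∪ {(c, b)}) := by
    intro r hr hbody
    by_cases hrf : r = f
    · right; simp [hrf, hfdef, factR]
    · have hrN : r ∈ M.erase f := Finset.mem_erase.2 ⟨hrf, hr⟩
      left
      by_cases hb : r.body = ∅
      · exact closed_minModel _ r hrN (by simp [hb])
      · have hrB : r ∈ B := mem_B_of_nonfact (hsub hr) hb
        have hbc := (h r hrB hb).2
        refine closed_minModel _ r hrN ?_
        intro l hl
        rcases hbody hl with hl1 | hl1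
        · exact hl1
        · exact absurd (by simpa using congrArg Prod.fst hl1)
            (hbc l (by simpa using hl))
  have hkey : ∀ b' : Bool, (c, b') ∈ minModel (M.erase f) → factR (c, b') ∈ M := by
    intro b' hmem
    obtain ⟨r, hr, hhead⟩ := minModel_subset_heads _ hmem
    have hrM : r ∈ M := Finset.mem_of_mem_erase hr
    by_cases hb : r.body = ∅
    · have : r = factR (c, b') := by
        cases r; simp_all [factR]
      rwa [← this]
    · have hrB : r ∈ B := mem_B_of_nonfact (hsub hrM) hb
      exact absurd (by rw [hhead]) (h r hrB hb).1
  simp only [Consistent, ConsistentLits, not_not] at hinc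
  obtain ⟨a, ha1, ha2⟩ := hinc
  have hm1 := ha1 _ hclosed
  have hm2 := ha2 _ hclosed
  rcases hm1 with hm1 | hm1 <;> rcases hm2 with hm2 | hm2
  · exact hN ⟨a, hm1, hm2⟩
  · have hm2' : (a, false) = (c, b) := hm2
    injection hm2' with hac hbf
    subst hac
    exact hnc ⟨a, hkey true hm1, by rw [hfdef] at hf; rwa [← hbf] at hf⟩
  · have hm1' : (a, true) = (c, b) := hm1
    injection hm1' with hac hbt
    subst hac
    exact hnc ⟨a, by rw [hfdef] at hf; rwa [← hbt] at hf, hkey false hm2⟩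
  · have hm1' : (a, true) = (c, b) := hm1
    have hm2' : (a, false) = (c, b) := hm2
    injection hm1' with _ h1
    injection hm2' with _ h2
    rw [← h1] at h2
    exact absurd h2 (by simp)

lemma MIF_insert_eq [DecidableEq A] (B : RuleBase A) (c : A)
    (h : ∀ r ∈ B, r.body ≠ ∅ → (r.head.1 ≠ c ∧ ∀ l ∈ r.body, l.1 ≠ c)) :
    MIF (insert (factR (c, true)) (insert (factR (c, false)) B)) = MIF B := by
  ext M
  constructor
  · intro hM
    have h1 := not_mem_MIF_fact B c h true M hM
    have h2 := not_mem_MIF_fact B c h false M hM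
    obtain ⟨⟨hsub, hinc, hmin⟩, hnc⟩ := hM
    refine ⟨⟨?_, hinc, hmin⟩, hnc⟩
    intro r hr
    rcases Finset.mem_insert.1 (hsub hr) with rfl | hr'
    · exact absurd hr h1
    · rcases Finset.mem_insert.1 hr' with rfl | hr''
      · exact absurd hr h2
      · exact hr''
  · intro hM
    obtain ⟨⟨hsub, hinc, hmin⟩, hnc⟩ := hM
    exact ⟨⟨fun r hr => Finset.mem_insert_of_mem (Finset.mem_insert_of_mem (hsub hr)),
      hinc, hmin⟩, hnc⟩

theorem stmt19 [DecidableEq A] [Fintype A] (B : RuleBase A) (c : A)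
    (h : ∀ r ∈ B, r.body ≠ ∅ → (r.head.1 ≠ c ∧ ∀ l ∈ r.body, l.1 ≠ c)) :
    IRBc (insert (factR (c, true)) (insert (factR (c, false)) B)) = IRBc B := by
  unfold IRBc
  rw [MIF_insert_eq B c h]
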